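/- Let κ > 0 be a real number and for t > 0 set α(t) = ∫₀^{κ√t} e^{-r²/2} dr. Then for every t > 0: ∫₀^∞ e^{-r²/(2t)} r sinh(κr) dr = √(π/2) κ t^{3/2} e^{κ²t/2}, and ∫₀^∞ e^{-r²/(2t)} r cosh(κr) dr = t + κ t^{3/2} e^{κ²t/2} α(t). -/

import Mathlib

open Real MeasureTheory

private lemma my_integrable_comp_add_right {f : ℝ → ℝ} (hf : Integrable f) (c : ℝ) :
    Integrable (fun x => f (x + c)) := by
  have A : MeasurableEmbedding (fun x : ℝ => x + c) :=
    (Homeomorph.addRight c).isClosedEmbedding.measurableEmbedding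
  have B : MeasurePreserving (fun x : ℝ => x + c) volume volume :=
    measurePreserving_add_right volume c
  exact (B.integrable_comp_emb A).mpr hf

private lemma my_setIntegral_Ioi_comp_add_right (f : ℝ → ℝ) (p c : ℝ) :
    ∫ x in Set.Ioi p, f (x + c) = ∫ x in Set.Ioi (p + c), f x := by
  have A : MeasurableEmbedding (fun x : ℝ => x + c) :=
    (Homeomorph.addRight c).isClosedEmbedding.measurableEmbedding
  have h := A.setIntegral_map (μ := volume) f (Set.Ioi (p + c))
  rw [map_add_right_eq_self volume c] at h
  have hpre : (fun x : ℝ => x + c) ⁻¹' Set.Ioi (p + c) = Set.Ioi p := by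
    ext x; simp [Set.mem_Ioi]
  rw [hpre] at h
  exact h.symm

/-- For `κ > 0` and `t > 0`, with `α(t) = ∫₀^{κ√t} e^{-r²/2} dr`,
`∫₀^∞ e^{-r²/(2t)} r sinh(κr) dr = √(π/2) κ t^{3/2} e^{κ²t/2}` and
`∫₀^∞ e^{-r²/(2t)} r cosh(κr) dr = t + κ t^{3/2} e^{κ²t/2} α(t)`. -/
theorem heat_integrals_order_one (κ : ℝ) (hκ : 0 < κ) (t : ℝ) (ht : 0 < t) :
    (∫ r in Set.Ioi (0 : ℝ), Real.exp (-r ^ 2 / (2 * t)) * r * Real.sinh (κ * r)) =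
      Real.sqrt (π / 2) * κ * t ^ ((3 : ℝ) / 2) * Real.exp (κ ^ 2 * t / 2) ∧
    (∫ r in Set.Ioi (0 : ℝ), Real.exp (-r ^ 2 / (2 * t)) * r * Real.cosh (κ * r)) =
      t + κ * t ^ ((3 : ℝ) / 2) * Real.exp (κ ^ 2 * t / 2) *
        (∫ r in (0 : ℝ)..(κ * Real.sqrt t), Real.exp (-r ^ 2 / 2)) := by
  have ht' : (2 : ℝ) * t ≠ 0 := by positivity
  set g : ℝ → ℝ := fun u => Real.exp (-u ^ 2 / (2 * t)) with hgdef
  set a : ℝ := κ * t with hadef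
  set K : ℝ := κ ^ 2 * t / 2 with hKdef
  have hb : (0 : ℝ) < 1 / (2 * t) := by positivity
  -- rewrite g in Gaussian normal form
  have hgform : g = fun u => Real.exp (-(1 / (2 * t)) * u ^ 2) := by
    funext u; simp only [hgdef]; congr 1; field_simp
  -- integrability facts
  have hg_int : Integrable g := by rw [hgform]; exact integrable_exp_neg_mul_sq hb
  have hug_int : Integrable (fun u => u * g u) := by
    rw [hgform]; exact integrable_mul_exp_neg_mul_sq hb
  have hg_cont : Continuous g := by
    rw [hgform]; exact (continuous_const.mul (continuous_pow 2)).rexp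
  -- ∫_{Ioi x} u g(u) du = t g(x)
  have hJ : ∀ x : ℝ, ∫ u in Set.Ioi x, u * g u = t * g x := by
    intro x
    have hderiv : ∀ y ∈ Set.Ioi x, HasDerivAt (fun u => -t * g u) (y * g y) y := by
      intro y _
      have h1 : HasDerivAt (fun u : ℝ => -u ^ 2 / (2 * t)) (-(2 * y ^ 1) / (2 * t)) y :=
        ((hasDerivAt_pow 2 y).neg).div_const (2 * t)
      have h2 := (h1.exp).const_mul (-t)
      refine h2.congr_deriv ?_
      simp only [hgdef]
      field_simp
    have htend : Filter.Tendsto (fun u => -t * g u) Filter.atTop (nhds 0) := by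
      have h1 : Filter.Tendsto (fun u : ℝ => -u ^ 2 / (2 * t)) Filter.atTop Filter.atBot := by
        apply Filter.Tendsto.atBot_div_const (by positivity)
        simpa using (tendsto_pow_atTop (two_ne_zero)).neg
      have h2 : Filter.Tendsto g Filter.atTop (nhds 0) :=
        Real.tendsto_exp_atBot.comp h1
      simpa using h2.const_mul (-t)
    have := integral_Ioi_of_hasDerivAt_of_tendsto
      ((continuous_const.mul hg_cont).continuousWithinAt) hderiv hug_int.integrableOn htend
    rw [this]; simp only [Pi.mul_apply]; ring
  -- shifted integral formula
  have hshift : ∀ c : ℝ, (∫ r in Set.Ioi (0 : ℝ), r * g (r + c)) =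
      t * g c - c * ∫ u in Set.Ioi c, g u := by
    intro c
    have h := my_setIntegral_Ioi_comp_add_right (fun u => (u - c) * g u) 0 c
    simp only [add_sub_cancel_right, zero_add] at h
    rw [h]
    have h2 : ∀ u : ℝ, (u - c) * g u = u * g u - c * g u := fun u => by ring
    rw [show (fun u : ℝ => (u - c) * g u) = fun u => u * g u - c * g u from funext h2]
    rw [integral_sub hug_int.integrableOn ((hg_int.const_mul c).integrableOn),
      integral_const_mul, hJ c]
  -- integrability of shifted integrands on Ioi 0
  have hshift_int : ∀ c : ℝ, IntegrableOn (fun r => r * g (r + c)) (Set.Ioi (0 : ℝ)) := by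
    intro c
    have h1 : Integrable (fun u => u * g u - c * g u) := hug_int.sub (hg_int.const_mul c)
    have h2 := my_integrable_comp_add_right h1 c
    have h3 : (fun x : ℝ => (x + c) * g (x + c) - c * g (x + c)) = fun x => x * g (x + c) := by
      funext x; ring
    rw [h3] at h2
    exact h2.integrableOn
  -- key exponential identities
  have e1 : ∀ r : ℝ, Real.exp (-r ^ 2 / (2 * t)) * Real.exp (κ * r) = Real.exp K * g (r + -a) := by
    intro r
    rw [hgdef, ← Real.exp_add, ← Real.exp_add]
    congr 1
    simp only [hadef, hKdef]
    field_simp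
    ring
  have e2 : ∀ r : ℝ, Real.exp (-r ^ 2 / (2 * t)) * Real.exp (-(κ * r)) =
      Real.exp K * g (r + a) := by
    intro r
    rw [hgdef, ← Real.exp_add, ← Real.exp_add]
    congr 1
    simp only [hadef, hKdef]
    field_simp
    ring
  have hgeven : ∀ x : ℝ, g (-x) = g x := by
    intro x; simp only [hgdef, neg_sq]
  -- N(-a) + N(a) = total Gaussian integral
  have hNsum : (∫ u in Set.Ioi (-a), g u) + (∫ u in Set.Ioi a, g u) =
      2 * Real.sqrt (π / 2) * Real.sqrt t := by
    have hrefl : (∫ u in Set.Iic (-a), g u) = ∫ u in Set.Ioi a, g u := by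
      have h := integral_comp_neg_Iic (-a) g
      simp only [hgeven, neg_neg] at h
      exact h
    have hsplit : (∫ u, g u) = (∫ u in Set.Iic (-a), g u) + ∫ u in Set.Ioi (-a), g u := by
      rw [← setIntegral_union (Set.Iic_disjoint_Ioi le_rfl) measurableSet_Ioi
        hg_int.integrableOn hg_int.integrableOn, Set.Iic_union_Ioi,
        MeasureTheory.Measure.restrict_univ]
    have htot : (∫ u, g u) = 2 * Real.sqrt (π / 2) * Real.sqrt t := by
      rw [hgform, integral_gaussian]
      rw [show π / (1 / (2 * t)) = (2 : ℝ) ^ 2 * (π / 2 * t) by field_simp]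
      rw [Real.sqrt_mul (by positivity), Real.sqrt_sq (by norm_num),
        Real.sqrt_mul (by positivity)]
      ring
    rw [hrefl] at hsplit
    linarith [hsplit, htot]
  have ha0 : (0 : ℝ) ≤ a := by rw [hadef]; positivity
  -- N(-a) - N(a) = 2 √t α(t)
  have hNdiff : (∫ u in Set.Ioi (-a), g u) - (∫ u in Set.Ioi a, g u) =
      2 * Real.sqrt t * ∫ r in (0 : ℝ)..(κ * Real.sqrt t), Real.exp (-r ^ 2 / 2) := by
    have hsplit : (∫ u in Set.Ioi (-a), g u) =
        (∫ u in Set.Ioc (-a) a, g u) + ∫ u in Set.Ioi a, g u := by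
      rw [← setIntegral_union (Set.Ioc_disjoint_Ioi le_rfl) measurableSet_Ioi
        hg_int.integrableOn hg_int.integrableOn, Set.Ioc_union_Ioi_eq_Ioi (by linarith)]
    have hIoc : (∫ u in Set.Ioc (-a) a, g u) = ∫ u in (-a)..a, g u := by
      rw [intervalIntegral.integral_of_le (by linarith)]
    have hsym : (∫ u in (-a)..a, g u) = 2 * ∫ u in (0 : ℝ)..a, g u := by
      have h1 : (∫ u in (-a)..(0 : ℝ), g u) = ∫ u in (0 : ℝ)..a, g u := by
        have h := intervalIntegral.integral_comp_neg (a := (0 : ℝ)) (b := a) (f := g)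
        simp only [hgeven, neg_zero] at h
        exact h.symm
      have h2 := intervalIntegral.integral_add_adjacent_intervals
        (a := -a) (b := 0) (c := a) (f := g)
        hg_int.intervalIntegrable hg_int.intervalIntegrable
      rw [← h2, h1]; ring
    have hsubst : (∫ u in (0 : ℝ)..a, g u) =
        Real.sqrt t * ∫ r in (0 : ℝ)..(κ * Real.sqrt t), Real.exp (-r ^ 2 / 2) := by
      have hst : Real.sqrt t ≠ 0 := by positivity
      have hcomp := intervalIntegral.integral_comp_mul_left (a := (0 : ℝ))
        (b := κ * Real.sqrt t) (f := g) (c := Real.sqrt t) hst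
      have harg : ∀ x : ℝ, g (Real.sqrt t * x) = Real.exp (-x ^ 2 / 2) := by
        intro x
        simp only [hgdef]
        congr 1
        rw [mul_pow, Real.sq_sqrt ht.le]
        field_simp
      have hb' : Real.sqrt t * (κ * Real.sqrt t) = a := by
        rw [hadef,
          show Real.sqrt t * (κ * Real.sqrt t) = κ * (Real.sqrt t * Real.sqrt t) by ring,
          Real.mul_self_sqrt ht.le]
      rw [hb', mul_zero] at hcomp
      simp only [harg] at hcomp
      rw [hcomp, smul_eq_mul]
      field_simp
    rw [hsplit, hIoc, hsym, hsubst]; ring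
  -- values of the shifted integrals
  have hP1 : (∫ r in Set.Ioi (0 : ℝ), r * g (r + -a)) =
      t * g a + a * ∫ u in Set.Ioi (-a), g u := by
    rw [hshift (-a), show g (-a) = g a from hgeven a]
    ring
  have hP2 : (∫ r in Set.Ioi (0 : ℝ), r * g (r + a)) =
      t * g a - a * ∫ u in Set.Ioi a, g u := hshift a
  -- exp K * g a = 1
  have hKa : Real.exp K * g a = 1 := by
    rw [hgdef, ← Real.exp_add, ← Real.exp_zero]
    congr 1
    simp only [hKdef, hadef]
    field_simp
    ring
  -- t^{3/2} = t * sqrt t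
  have h32 : t ^ ((3 : ℝ) / 2) = t * Real.sqrt t := by
    rw [show (3 : ℝ) / 2 = 1 + 1 / 2 by norm_num, Real.rpow_add ht, Real.rpow_one,
      ← Real.sqrt_eq_rpow]
  constructor
  · -- sinh part
    have hs : ∀ r : ℝ, Real.exp (-r ^ 2 / (2 * t)) * r * Real.sinh (κ * r) =
        Real.exp K / 2 * (r * g (r + -a)) - Real.exp K / 2 * (r * g (r + a)) := by
      intro r
      rw [Real.sinh_eq]
      have A := e1 r
      have B := e2 r
      linear_combination (r / 2) * A - (r / 2) * B
    rw [show (fun r : ℝ => Real.exp (-r ^ 2 / (2 * t)) * r * Real.sinh (κ * r)) =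
        fun r => Real.exp K / 2 * (r * g (r + -a)) - Real.exp K / 2 * (r * g (r + a))
      from funext hs]
    rw [integral_sub ((hshift_int (-a)).const_mul _) ((hshift_int a).const_mul _),
      integral_const_mul, integral_const_mul, hP1, hP2, h32]
    linear_combination (Real.exp K / 2 * a) * hNsum +
      (Real.exp K * Real.sqrt (π / 2) * Real.sqrt t) * hadef
  · -- cosh part
    have hs : ∀ r : ℝ, Real.exp (-r ^ 2 / (2 * t)) * r * Real.cosh (κ * r) =
        Real.exp K / 2 * (r * g (r + -a)) + Real.exp K / 2 * (r * g (r + a)) := by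
      intro r
      rw [Real.cosh_eq]
      have A := e1 r
      have B := e2 r
      linear_combination (r / 2) * A + (r / 2) * B
    rw [show (fun r : ℝ => Real.exp (-r ^ 2 / (2 * t)) * r * Real.cosh (κ * r)) =
        fun r => Real.exp K / 2 * (r * g (r + -a)) + Real.exp K / 2 * (r * g (r + a))
      from funext hs]
    rw [integral_add ((hshift_int (-a)).const_mul _) ((hshift_int a).const_mul _),
      integral_const_mul, integral_const_mul, hP1, hP2, h32]
    linear_combination t * hKa + (Real.exp K / 2 * a) * hNdiff +
      (Real.exp K * Real.sqrt t *
        (∫ r in (0 : ℝ)..(κ * Real.sqrt t), Real.exp (-r ^ 2 / 2))) * hadef
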